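/- Let K be a field of characteristic 0, let p ∈ K[x] be a polynomial of degree m ≥ 1 with roots α₁,…,α_m in an algebraic closure of K and leading coefficient ℓ. Let f = q/h be a nonconstant rational function with q, h ∈ K[x], and set e = max(deg h, deg q) − deg h. If p and h have no common root in the algebraic closure, then ∏_{i=1}^m (x − f(α_i)) = Res_y(p(y), h(y)·x − q(y)) / (Res(p,h) · ℓ^e) as polynomials in K[x]. -/

import Mathlib

noncomputable section
open Polynomial

/-- The Sylvester matrix of two polynomials `p`, `q` (of sizes given by their degrees):
the first `q.natDegree` rows carry the coefficients of `p`, the remaining `p.natDegree`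
rows those of `q`. -/
def sylvester {R : Type*} [CommRing R] (p q : R[X]) :
    Matrix (Fin (p.natDegree + q.natDegree)) (Fin (p.natDegree + q.natDegree)) R :=
  fun i j =>
    if (i : ℕ) < q.natDegree then
      (if (i : ℕ) ≤ (j : ℕ) ∧ (j : ℕ) ≤ (i : ℕ) + p.natDegree then
        p.coeff (p.natDegree + (i : ℕ) - (j : ℕ)) else 0)
    else
      (if (i : ℕ) - q.natDegree ≤ (j : ℕ) ∧ (j : ℕ) ≤ (i : ℕ) - q.natDegree + q.natDegree then
        q.coeff (q.natDegree + ((i : ℕ) - q.natDegree) - (j : ℕ)) else 0)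

/-- The resultant of two polynomials, as the determinant of their Sylvester matrix. -/
def resultant {R : Type*} [CommRing R] (p q : R[X]) : R := (_root_.sylvester p q).det

namespace ResAux

variable {R : Type*} [CommRing R]

def sylvAux (a b : ℕ) (P Q : ℕ → R) : Matrix (Fin (a + b)) (Fin (a + b)) R :=
  fun i j =>
    if (i : ℕ) < b then
      (if (i : ℕ) ≤ (j : ℕ) ∧ (j : ℕ) ≤ (i : ℕ) + a then P (a + (i : ℕ) - (j : ℕ)) else 0)
    else
      (if (i : ℕ) - b ≤ (j : ℕ) ∧ (j : ℕ) ≤ (i : ℕ) - b + b then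
        Q (b + ((i : ℕ) - b) - (j : ℕ)) else 0)

lemma resultant_eq_det (p q : R[X]) {a b : ℕ} (ha : p.natDegree = a) (hb : q.natDegree = b) :
    _root_.resultant p q = (sylvAux a b p.coeff q.coeff).det := by
  subst ha; subst hb; rfl

lemma resultant_map {S : Type*} [CommRing S] (φ : R →+* S) (p q : R[X])
    (hp : (p.map φ).natDegree = p.natDegree) (hq : (q.map φ).natDegree = q.natDegree) :
    _root_.resultant (p.map φ) (q.map φ) = φ (_root_.resultant p q) := by
  rw [resultant_eq_det (p.map φ) (q.map φ) hp hq, resultant_eq_det p q rfl rfl]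
  have : sylvAux p.natDegree q.natDegree (p.map φ).coeff (q.map φ).coeff
      = (sylvAux p.natDegree q.natDegree p.coeff q.coeff).map φ := by
    ext i j
    simp only [sylvAux, Matrix.map_apply, apply_ite φ, map_zero, coeff_map]
  rw [this]; exact (RingHom.map_det φ _).symm


lemma key_sum {F : Type*} [CommRing F] (g : F[X]) (t N : ℕ) (hN : t + g.natDegree < N) (γ : F) :
    ∑ j : Fin N, (if t ≤ (j : ℕ) ∧ (j : ℕ) ≤ t + g.natDegree then
        g.coeff (g.natDegree + t - (j : ℕ)) else 0) * γ ^ (N - 1 - (j : ℕ))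
      = γ ^ (N - 1 - t - g.natDegree) * g.eval γ := by
  set d := g.natDegree with hd
  rw [Polynomial.eval_eq_sum_range, Finset.mul_sum]
  rw [Fin.sum_univ_eq_sum_range
    (fun j => (if t ≤ j ∧ j ≤ t + d then g.coeff (d + t - j) else 0) * γ ^ (N - 1 - j))]
  simp only [ite_mul, zero_mul]
  rw [← Finset.sum_filter]
  have hfil : (Finset.range N).filter (fun j => t ≤ j ∧ j ≤ t + d) = Finset.Icc t (t + d) := by
    ext x; simp only [Finset.mem_filter, Finset.mem_range, Finset.mem_Icc]; omega
  rw [hfil]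
  refine Finset.sum_nbij' (fun j => d + t - j) (fun u => d + t - u) ?_ ?_ ?_ ?_ ?_
  · intro a ha; simp only [Finset.mem_Icc] at ha; simp only [Finset.mem_range]; omega
  · intro a ha; simp only [Finset.mem_range] at ha; simp only [Finset.mem_Icc]; omega
  · intro a ha; simp only [Finset.mem_Icc] at ha; show d + t - (d + t - a) = a; omega
  · intro a ha; simp only [Finset.mem_range] at ha; show d + t - (d + t - a) = a; omega
  · intro j hj
    simp only [Finset.mem_Icc] at hj
    rw [show N - 1 - j = (N - 1 - t - d) + (d + t - j) by omega, pow_add]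
    ring


lemma resultant_eq_prod_of_field {F : Type*} [Field F] (m n : ℕ) (c : F) (hc : c ≠ 0)
    (α : Fin m → F) (hα : Function.Injective α) (g : F[X]) (hg : g.natDegree = n)
    (p : F[X]) (hp : p = C c * ∏ i : Fin m, (X - C (α i))) :
    _root_.resultant p g = c ^ n * ∏ i : Fin m, g.eval (α i) := by
  have hmonic : (∏ i : Fin m, (X - C (α i))).Monic :=
    monic_prod_of_monic _ _ fun i _ => monic_X_sub_C _
  have hprodnd : (∏ i : Fin m, (X - C (α i))).natDegree = m := by
    rw [Polynomial.natDegree_prod]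
    · simp [natDegree_X_sub_C]
    · intro i _; exact X_sub_C_ne_zero _
  have hpm : p.natDegree = m := by
    rw [hp, Polynomial.natDegree_C_mul hc, hprodnd]
  have hlc : p.coeff m = c := by
    have hl : p.leadingCoeff = c := by
      rw [hp, leadingCoeff_mul, leadingCoeff_C, hmonic.leadingCoeff, mul_one]
    rw [← hpm, ← hl]; rfl
  have hroot : ∀ b : Fin m, p.eval (α b) = 0 := by
    intro b
    rw [hp, eval_mul, eval_prod]
    apply mul_eq_zero_of_right
    exact Finset.prod_eq_zero (Finset.mem_univ b) (by simp)
  rw [resultant_eq_det p g hpm hg]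
  set N := m + n with hN
  set S : Matrix (Fin N) (Fin N) F := sylvAux m n p.coeff g.coeff with hS
  set e : (Fin n ⊕ Fin m) ≃ Fin N := finSumFinEquiv.trans (finCongr (Nat.add_comm n m)) with hee
  have he1 : ∀ a : Fin n, ((e (Sum.inl a)) : ℕ) = (a : ℕ) := by intro a; simp [hee]
  have he2 : ∀ b : Fin m, ((e (Sum.inr b)) : ℕ) = n + (b : ℕ) := by
    intro b; simp [hee]; omega
  set A₁ : Matrix (Fin n) (Fin n) F := fun a a' => S (e (Sum.inl a)) (e (Sum.inl a')) with hA₁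
  set A₂ : Matrix (Fin m) (Fin n) F := fun b a' => S (e (Sum.inr b)) (e (Sum.inl a')) with hA₂
  set D₀ : Matrix (Fin m) (Fin m) F := fun b b' => α b' ^ (m - 1 - (b : ℕ)) with hD₀
  set D' : Matrix (Fin m) (Fin m) F :=
    fun b b' => α b' ^ (m - 1 - (b : ℕ)) * g.eval (α b') with hD'
  set U : Matrix (Fin n) (Fin m) F := fun a b => α b ^ (N - 1 - (a : ℕ)) with hU
  set W : Matrix (Fin n ⊕ Fin m) (Fin n ⊕ Fin m) F := Matrix.fromBlocks 1 U 0 D₀ with hW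
  have hrowp : ∀ (a : Fin n) (j : Fin N), S (e (Sum.inl a)) j =
      (if (a : ℕ) ≤ (j : ℕ) ∧ (j : ℕ) ≤ (a : ℕ) + m then p.coeff (m + (a : ℕ) - (j : ℕ))
        else 0) := by
    intro a j
    simp only [hS, sylvAux, he1]
    rw [if_pos a.isLt]
  have hrowg : ∀ (b : Fin m) (j : Fin N), S (e (Sum.inr b)) j =
      (if (b : ℕ) ≤ (j : ℕ) ∧ (j : ℕ) ≤ (b : ℕ) + n then g.coeff (n + (b : ℕ) - (j : ℕ))
        else 0) := by
    intro b j
    simp only [hS, sylvAux, he2]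
    rw [if_neg (by omega), Nat.add_sub_cancel_left]
  have hmul : S.submatrix e e * W = Matrix.fromBlocks A₁ 0 A₂ D' := by
    ext i k
    cases k with
    | inl a' =>
      have hcol : ∀ x : Fin n ⊕ Fin m,
          S (e i) (e x) * W x (Sum.inl a')
            = if x = Sum.inl a' then S (e i) (e (Sum.inl a')) else 0 := by
        intro x
        cases x with
        | inl a'' =>
          simp only [hW, Matrix.fromBlocks_apply₁₁, Matrix.one_apply]
          by_cases hxa : a'' = a' <;> simp [hxa]
        | inr b'' => simp [hW]
      have : (S.submatrix e e * W) i (Sum.inl a') = S (e i) (e (Sum.inl a')) := by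
        rw [Matrix.mul_apply]
        simp only [Matrix.submatrix_apply]
        rw [Finset.sum_congr rfl (fun x _ => hcol x)]
        simp
      rw [this]
      cases i with
      | inl a => rfl
      | inr b => rfl
    | inr b' =>
      have hWcol : ∀ x : Fin n ⊕ Fin m, W x (Sum.inr b') = α b' ^ (N - 1 - ((e x : Fin N) : ℕ)) := by
        intro x
        cases x with
        | inl a'' => simp only [hW, Matrix.fromBlocks_apply₁₂, hU, he1]; rfl
        | inr b'' =>
          simp only [hW, Matrix.fromBlocks_apply₂₂, hD₀, he2]
          show α b' ^ (m - 1 - (b'' : ℕ)) = α b' ^ (N - 1 - (n + (b'' : ℕ)))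
          congr 1
          have := b''.isLt
          omega
      have hsum : (S.submatrix e e * W) i (Sum.inr b')
          = ∑ j : Fin N, S (e i) j * α b' ^ (N - 1 - (j : ℕ)) := by
        rw [Matrix.mul_apply]
        simp only [Matrix.submatrix_apply]
        exact Fintype.sum_equiv e _ _ (fun x => by rw [hWcol x])
      cases i with
      | inl a =>
        have hkey := key_sum p (a : ℕ) N (by rw [hpm, hN]; have := a.isLt; omega) (α b')
        rw [hpm] at hkey
        rw [hsum, Finset.sum_congr rfl (fun j _ => by rw [hrowp a j]), hkey, hroot b', mul_zero]
        rfl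
      | inr b =>
        have hkey := key_sum g (b : ℕ) N (by rw [hg, hN]; have := b.isLt; omega) (α b')
        rw [hg] at hkey
        rw [hsum, Finset.sum_congr rfl (fun j _ => by rw [hrowg b j]), hkey]
        show _ = D' b b'
        rw [hD']
        congr 2
        have := b.isLt
        omega
  have hdS : S.det = (S.submatrix e e).det := (Matrix.det_submatrix_equiv_self e S).symm
  have hdW : W.det = D₀.det := by
    rw [hW, Matrix.det_fromBlocks_zero₂₁, Matrix.det_one, one_mul]
  have hdA₁ : A₁.det = c ^ n := by
    rw [Matrix.det_of_upperTriangular]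
    · have hdiag : ∀ a : Fin n, A₁ a a = c := by
        intro a
        rw [hA₁]
        show S _ _ = c
        rw [hrowp a (e (Sum.inl a)), he1, if_pos ⟨le_refl _, Nat.le_add_right _ _⟩,
          Nat.add_sub_cancel, hlc]
      rw [Finset.prod_congr rfl (fun a _ => hdiag a)]
      simp
    · intro i j hji
      rw [hA₁]
      show S _ _ = 0
      rw [hrowp i (e (Sum.inl j)), he1, if_neg]
      rintro ⟨h1, -⟩
      exact absurd (Fin.lt_iff_val_lt_val.mp hji) (not_lt.mpr h1)
  have hdD' : D'.det = D₀.det * ∏ b : Fin m, g.eval (α b) := by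
    have hfac : D' = D₀ * Matrix.diagonal (fun b => g.eval (α b)) := by
      ext b b'; rw [Matrix.mul_diagonal]
    rw [hfac, Matrix.det_mul, Matrix.det_diagonal]
  have hdD₀ : D₀.det ≠ 0 := by
    have hrw : D₀ = ((Matrix.vandermonde α).transpose).submatrix (⇑(Fin.revPerm)) id := by
      ext b b'
      show α b' ^ (m - 1 - (b : ℕ)) = _
      simp only [Matrix.submatrix_apply, Matrix.transpose_apply, Matrix.vandermonde_apply,
        Fin.revPerm_apply, id_eq]
      congr 1
      rw [Fin.val_rev]
      have := b.isLt
      omega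
    rw [hrw, Matrix.det_permute, Matrix.det_transpose]
    have hv := Matrix.det_vandermonde_ne_zero_iff.mpr hα
    rcases Int.units_eq_one_or (Equiv.Perm.sign (Fin.revPerm : Equiv.Perm (Fin m))) with h | h <;>
      rw [h] <;> simp [hv]
  have main : (S.submatrix e e).det * W.det = c ^ n * (D₀.det * ∏ b : Fin m, g.eval (α b)) := by
    rw [← Matrix.det_mul, hmul, Matrix.det_fromBlocks_zero₁₂, hdA₁, hdD']
  have final : S.det * D₀.det = (c ^ n * ∏ b : Fin m, g.eval (α b)) * D₀.det := by
    calc S.det * D₀.det = (S.submatrix e e).det * W.det := by rw [hdS, hdW]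
      _ = c ^ n * (D₀.det * ∏ b : Fin m, g.eval (α b)) := main
      _ = (c ^ n * ∏ b : Fin m, g.eval (α b)) * D₀.det := by ring
  exact mul_right_cancel₀ hdD₀ final


lemma eval_map_hom {R S : Type*} [CommRing R] [CommRing S] (φ : R →+* S) (r : R[X]) (x : R) :
    (r.map φ).eval (φ x) = φ (r.eval x) := by
  rw [eval_map, eval₂_at_apply]

lemma natDegree_C_mul_prod {R : Type*} [CommRing R] [IsDomain R] {m : ℕ} (c : R) (hc : c ≠ 0)
    (α : Fin m → R) : (C c * ∏ i : Fin m, (X - C (α i))).natDegree = m := by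
  rw [Polynomial.natDegree_C_mul hc, Polynomial.natDegree_prod]
  · simp [natDegree_X_sub_C]
  · intro i _; exact X_sub_C_ne_zero _

/-- The fundamental product formula for the resultant, over an arbitrary commutative ring. -/
lemma resultant_eq_prod {S : Type*} [CommRing S] (m n : ℕ) (c : S) (α : Fin m → S)
    (g p : S[X]) (hp : p = C c * ∏ i : Fin m, (X - C (α i)))
    (hpm : p.natDegree = m) (hgn : g.natDegree = n) :
    _root_.resultant p g = c ^ n * ∏ i : Fin m, g.eval (α i) := by
  classical
  let R := MvPolynomial (Fin m ⊕ (Fin (n + 1) ⊕ Unit)) ℤ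
  let A : Fin m → R := fun i => MvPolynomial.X (Sum.inl i)
  let G : Fin (n + 1) → R := fun j => MvPolynomial.X (Sum.inr (Sum.inl j))
  let cc : R := MvPolynomial.X (Sum.inr (Sum.inr ()))
  let p₀ : R[X] := C cc * ∏ i : Fin m, (X - C (A i))
  let g₀ : R[X] := ∑ j : Fin (n + 1), monomial (j : ℕ) (G j)
  let F := FractionRing R
  let φ : R →+* F := algebraMap R F
  have hφ : Function.Injective φ := IsFractionRing.injective R F
  have hccR : cc ≠ 0 := MvPolynomial.X_ne_zero _
  have hcc : φ cc ≠ 0 := fun hz => hccR (hφ (by simpa using hz))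
  have hαinj : Function.Injective (fun i => φ (A i)) := by
    intro i j hij
    exact Sum.inl_injective (MvPolynomial.X_injective (hφ hij))
  -- degrees of the generic polynomials
  have hg₀coeffn : g₀.coeff n = G (Fin.last n) := by
    rw [finset_sum_coeff]
    rw [Finset.sum_eq_single (Fin.last n)]
    · simp [coeff_monomial, Fin.val_last]
    · intro j _ hj
      rw [coeff_monomial, if_neg]
      intro hc'
      exact hj (Fin.ext (by simpa [Fin.val_last] using hc'))
    · simp
  have hg₀n : g₀.natDegree = n := by
    refine le_antisymm ?_ (le_natDegree_of_ne_zero ?_)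
    · apply natDegree_sum_le_of_forall_le
      intro j _
      exact (natDegree_monomial_le _).trans (by omega)
    · rw [hg₀coeffn]; exact MvPolynomial.X_ne_zero _
  have hp₀m : p₀.natDegree = m := natDegree_C_mul_prod cc hccR A
  -- the generic identity, proved in the fraction field
  have key : _root_.resultant p₀ g₀ = cc ^ n * ∏ i : Fin m, g₀.eval (A i) := by
    apply hφ
    rw [← resultant_map φ p₀ g₀ (by rw [natDegree_map_eq_of_injective hφ])
      (by rw [natDegree_map_eq_of_injective hφ])]
    have hsplit : p₀.map φ = C (φ cc) * ∏ i : Fin m, (X - C (φ (A i))) := by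
      simp [p₀, Polynomial.map_mul, Polynomial.map_prod, Polynomial.map_sub]
    rw [resultant_eq_prod_of_field m n (φ cc) hcc (fun i => φ (A i)) hαinj (g₀.map φ)
      (by rw [natDegree_map_eq_of_injective hφ, hg₀n]) (p₀.map φ) hsplit]
    rw [map_mul, map_pow, map_prod]
    congr 1
    exact Finset.prod_congr rfl fun i _ => (eval_map_hom φ g₀ (A i))
  -- specialize
  let v : (Fin m ⊕ (Fin (n + 1) ⊕ Unit)) → S :=
    Sum.elim α (Sum.elim (fun j => g.coeff j) (fun _ => c))
  let ψ : R →+* S := (MvPolynomial.aeval v).toRingHom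
  have hψA : ∀ i, ψ (A i) = α i := fun i => by
    show (MvPolynomial.aeval v) (MvPolynomial.X (Sum.inl i)) = _
    rw [MvPolynomial.aeval_X]
    rfl
  have hψcc : ψ cc = c := by
    show (MvPolynomial.aeval v) (MvPolynomial.X (Sum.inr (Sum.inr ()))) = _
    rw [MvPolynomial.aeval_X]
    rfl
  have hψG : ∀ j, ψ (G j) = g.coeff j := fun j => by
    show (MvPolynomial.aeval v) (MvPolynomial.X (Sum.inr (Sum.inl j))) = _
    rw [MvPolynomial.aeval_X]
    rfl
  have hmapp : p₀.map ψ = p := by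
    rw [hp]
    simp [p₀, Polynomial.map_mul, Polynomial.map_prod, Polynomial.map_sub, hψA, hψcc]
  have hmapg : g₀.map ψ = g := by
    have hg' : g = ∑ j : Fin (n + 1), monomial (j : ℕ) (g.coeff j) := by
      conv_lhs => rw [g.as_sum_range' (n + 1) (by omega)]
      rw [← Fin.sum_univ_eq_sum_range]
    rw [Polynomial.map_sum]
    simp only [Polynomial.map_monomial, hψG]
    exact hg'.symm
  have := resultant_map ψ p₀ g₀ (by rw [hmapp, hpm, hp₀m]) (by rw [hmapg, hgn, hg₀n])
  rw [hmapp, hmapg] at this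
  rw [this, key, map_mul, map_pow, map_prod, hψcc]
  congr 1
  refine Finset.prod_congr rfl fun i _ => ?_
  rw [← hψA i, ← eval_map_hom ψ g₀ (A i), hmapg]


lemma field_calc {F : Type*} [Field F] (m dh e d : ℕ) (hde : dh + e = d) (t u : F)
    (A B : Fin m → F) (hA : ∀ i, A i ≠ 0) :
    (∏ i : Fin m, (t - B i / A i)) * ((u ^ dh * ∏ i : Fin m, A i) * u ^ e)
      = u ^ d * ∏ i : Fin m, (A i * t - B i) := by
  have h1 : ∀ i : Fin m, (t - B i / A i) * A i = A i * t - B i := by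
    intro i
    rw [sub_mul, div_mul_cancel₀ _ (hA i)]
    ring
  calc (∏ i : Fin m, (t - B i / A i)) * ((u ^ dh * ∏ i : Fin m, A i) * u ^ e)
      = (∏ i : Fin m, ((t - B i / A i) * A i)) * (u ^ dh * u ^ e) := by
        rw [Finset.prod_mul_distrib]; ring
    _ = (∏ i : Fin m, (A i * t - B i)) * u ^ d := by
        rw [Finset.prod_congr rfl fun i _ => h1 i, ← pow_add, hde]
    _ = u ^ d * ∏ i : Fin m, (A i * t - B i) := mul_comm _ _

end ResAux

open ResAux in
/-- Let `K` be a field of characteristic zero, `p ∈ K[x]` of degree `m ≥ 1` with leading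
coefficient `ℓ` and roots `α₁, …, α_m` in `K̄`, and let `f = q/h` be a nonconstant rational
function, `e = max(deg h, deg q) − deg h`. If `p` and `h` have no common root in `K̄`, then
`∏ᵢ (x − f(αᵢ)) · (Res(p,h)·ℓᵉ) = Res_y(p(y), h(y)·x − q(y))` in `K̄[x]`. -/
theorem stmt_0 (K : Type*) [Field K] [CharZero K]
    (p : K[X]) (m : ℕ) (hm : 1 ≤ m) (hdeg : p.natDegree = m)
    (ℓ : K) (hl : p.leadingCoeff = ℓ)
    (α : Fin m → AlgebraicClosure K)
    (hsplit : p.map (algebraMap K (AlgebraicClosure K)) =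
      C (algebraMap K (AlgebraicClosure K) ℓ) * ∏ i : Fin m, (X - C (α i)))
    (q h : K[X]) (hh : h ≠ 0)
    (hnonconst : ¬ ∃ k : K, q = C k * h)
    (e : ℕ) (he : e = max h.natDegree q.natDegree - h.natDegree)
    (hnocommon : ∀ z : AlgebraicClosure K,
      (p.map (algebraMap K (AlgebraicClosure K))).eval z = 0 →
      (h.map (algebraMap K (AlgebraicClosure K))).eval z ≠ 0) :
    (∏ i : Fin m,
        ((X : (AlgebraicClosure K)[X]) -
          C ((q.map (algebraMap K (AlgebraicClosure K))).eval (α i) /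
             (h.map (algebraMap K (AlgebraicClosure K))).eval (α i)))) *
      C (algebraMap K (AlgebraicClosure K) (_root_.resultant p h * ℓ^e)) =
    (_root_.resultant (p.map (C : K →+* K[X]))
        (h.map (C : K →+* K[X]) * C (X : K[X]) - q.map (C : K →+* K[X]))).map
      (algebraMap K (AlgebraicClosure K)) := by
  classical
  set d := max h.natDegree q.natDegree with hd
  set P : (K[X])[X] := p.map (C : K →+* K[X]) with hP
  set G : (K[X])[X] :=
    h.map (C : K →+* K[X]) * C (X : K[X]) - q.map (C : K →+* K[X]) with hG
  have hφinj : Function.Injective (algebraMap K (AlgebraicClosure K)) :=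
    (algebraMap K (AlgebraicClosure K)).injective
  let Ω := AlgebraicClosure (FractionRing (Polynomial (AlgebraicClosure K)))
  let ι : Polynomial (AlgebraicClosure K) →+* Ω :=
    (algebraMap (FractionRing (Polynomial (AlgebraicClosure K))) Ω).comp
      (algebraMap (Polynomial (AlgebraicClosure K))
        (FractionRing (Polynomial (AlgebraicClosure K))))
  have hι : Function.Injective ι := fun a b hab =>
    IsFractionRing.injective (Polynomial (AlgebraicClosure K))
      (FractionRing (Polynomial (AlgebraicClosure K)))
      (RingHom.injective
        (algebraMap (FractionRing (Polynomial (AlgebraicClosure K))) Ω) hab)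
  let ρ : AlgebraicClosure K →+* Ω := ι.comp (Polynomial.C)
  have hρ : Function.Injective ρ := hι.comp Polynomial.C_injective
  let Φ : Polynomial K →+* Ω :=
    ι.comp (Polynomial.mapRingHom (algebraMap K (AlgebraicClosure K)))
  have hΦ : Function.Injective Φ := hι.comp (Polynomial.map_injective _ hφinj)
  let t : Ω := ι Polynomial.X
  have hιC : ∀ z : AlgebraicClosure K, ι (Polynomial.C z) = ρ z := fun z => rfl
  have hιX : ι (Polynomial.X) = t := rfl
  have hp0 : p ≠ 0 := by
    intro h0
    rw [h0] at hdeg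
    simp only [natDegree_zero] at hdeg
    omega
  have hℓ : ℓ ≠ 0 := by rw [← hl]; exact leadingCoeff_ne_zero.mpr hp0
  have hαroot : ∀ i : Fin m, (p.map (algebraMap K (AlgebraicClosure K))).eval (α i) = 0 := by
    intro i
    rw [hsplit, eval_mul, eval_prod]
    apply mul_eq_zero_of_right
    exact Finset.prod_eq_zero (Finset.mem_univ i) (by simp)
  have hH : ∀ i : Fin m, (h.map (algebraMap K (AlgebraicClosure K))).eval (α i) ≠ 0 :=
    fun i => hnocommon (α i) (hαroot i)
  have hGcoeff : ∀ k : ℕ, G.coeff k = C (h.coeff k) * X - C (q.coeff k) := by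
    intro k
    rw [hG, coeff_sub, Polynomial.coeff_mul_C, coeff_map, coeff_map]
  have hGd : G.natDegree = d := by
    refine le_antisymm ?_ (le_natDegree_of_ne_zero ?_)
    · apply Polynomial.natDegree_le_iff_coeff_eq_zero.mpr
      intro k hk
      rw [hGcoeff k, coeff_eq_zero_of_natDegree_lt (lt_of_le_of_lt (le_max_left _ _) hk),
        coeff_eq_zero_of_natDegree_lt (lt_of_le_of_lt (le_max_right _ _) hk)]
      simp
    · rw [hGcoeff d]
      by_cases hcase : q.natDegree ≤ h.natDegree
      · have hdh : d = h.natDegree := max_eq_left hcase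
        intro h0
        have h1 := congrArg (fun r => r.coeff 1) h0
        simp only [coeff_sub, coeff_C_mul, coeff_X_one, mul_one, coeff_C, coeff_zero,
          if_neg (one_ne_zero), sub_zero] at h1
        rw [hdh] at h1
        exact leadingCoeff_ne_zero.mpr hh h1
      · push_neg at hcase
        have hdq : d = q.natDegree := max_eq_right (le_of_lt hcase)
        have hq0 : q ≠ 0 := by
          intro h0
          rw [h0, natDegree_zero] at hcase
          omega
        have hhd : h.coeff d = 0 :=
          coeff_eq_zero_of_natDegree_lt (by omega)
        rw [hhd, map_zero, zero_mul, zero_sub, hdq]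
        simp only [ne_eq, neg_eq_zero, C_eq_zero]
        exact leadingCoeff_ne_zero.mpr hq0
  have hPm : P.natDegree = m := by
    rw [hP, natDegree_map_eq_of_injective Polynomial.C_injective, hdeg]
  have hcompC : Φ.comp (Polynomial.C : K →+* K[X]) =
      ρ.comp (algebraMap K (AlgebraicClosure K)) := by
    ext k
    show ι (Polynomial.map (algebraMap K (AlgebraicClosure K)) (C k)) = _
    rw [Polynomial.map_C]
    rfl
  have hPmap : P.map Φ = (p.map (algebraMap K (AlgebraicClosure K))).map ρ := by
    rw [hP, Polynomial.map_map, Polynomial.map_map, hcompC]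
  have hsplitΩ : P.map Φ = C (ρ (algebraMap K (AlgebraicClosure K) ℓ)) *
      ∏ i : Fin m, (X - C (ρ (α i))) := by
    rw [hPmap, hsplit]
    simp [Polynomial.map_mul, Polynomial.map_prod, Polynomial.map_sub, Polynomial.map_C,
      Polynomial.map_X]
  have hPmΩ : (P.map Φ).natDegree = m := by
    rw [hPmap, natDegree_map_eq_of_injective hρ, natDegree_map_eq_of_injective hφinj, hdeg]
  have hGdΩ : (G.map Φ).natDegree = d := by
    rw [natDegree_map_eq_of_injective hΦ, hGd]
  have hΦX : Φ (X : K[X]) = t := by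
    show ι (Polynomial.map (algebraMap K (AlgebraicClosure K)) X) = t
    rw [Polynomial.map_X]
  have hGmap : G.map Φ = (h.map (algebraMap K (AlgebraicClosure K))).map ρ * C t
      - (q.map (algebraMap K (AlgebraicClosure K))).map ρ := by
    rw [hG, Polynomial.map_sub, Polynomial.map_mul, Polynomial.map_C, hΦX,
      Polynomial.map_map, Polynomial.map_map, hcompC,
      ← Polynomial.map_map (algebraMap K (AlgebraicClosure K)) ρ h,
      ← Polynomial.map_map (algebraMap K (AlgebraicClosure K)) ρ q]
  have hGeval : ∀ i : Fin m, (G.map Φ).eval (ρ (α i)) =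
      ρ ((h.map (algebraMap K (AlgebraicClosure K))).eval (α i)) * t
        - ρ ((q.map (algebraMap K (AlgebraicClosure K))).eval (α i)) := by
    intro i
    rw [hGmap, eval_sub, eval_mul, eval_C, eval_map_hom ρ _ (α i), eval_map_hom ρ _ (α i)]
  have hres1 : algebraMap K (AlgebraicClosure K) (_root_.resultant p h) =
      (algebraMap K (AlgebraicClosure K) ℓ) ^ h.natDegree *
        ∏ i : Fin m, (h.map (algebraMap K (AlgebraicClosure K))).eval (α i) := by
    rw [← resultant_map (algebraMap K (AlgebraicClosure K)) p h
      (natDegree_map_eq_of_injective hφinj p) (natDegree_map_eq_of_injective hφinj h)]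
    exact resultant_eq_prod m h.natDegree _ α _ _ hsplit
      (by rw [natDegree_map_eq_of_injective hφinj, hdeg])
      (natDegree_map_eq_of_injective hφinj h)
  have hres2 : Φ (_root_.resultant P G) =
      ρ (algebraMap K (AlgebraicClosure K) ℓ) ^ d *
        ∏ i : Fin m, (ρ ((h.map (algebraMap K (AlgebraicClosure K))).eval (α i)) * t
          - ρ ((q.map (algebraMap K (AlgebraicClosure K))).eval (α i))) := by
    rw [← resultant_map Φ P G (by rw [hPmΩ, hPm]) (by rw [hGdΩ, hGd])]
    rw [resultant_eq_prod m d (ρ (algebraMap K (AlgebraicClosure K) ℓ)) (fun i => ρ (α i))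
      (G.map Φ) (P.map Φ) hsplitΩ hPmΩ hGdΩ]
    congr 1
    exact Finset.prod_congr rfl fun i _ => hGeval i
  apply hι
  rw [show ι ((_root_.resultant P G).map (algebraMap K (AlgebraicClosure K))) = Φ (_root_.resultant P G)
    from rfl, hres2]
  rw [map_mul ι, map_prod ι]
  have hfac : ∀ i : Fin m, ι ((X : (AlgebraicClosure K)[X]) -
      C ((q.map (algebraMap K (AlgebraicClosure K))).eval (α i) /
        (h.map (algebraMap K (AlgebraicClosure K))).eval (α i)))
      = t - ρ ((q.map (algebraMap K (AlgebraicClosure K))).eval (α i)) /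
          ρ ((h.map (algebraMap K (AlgebraicClosure K))).eval (α i)) := by
    intro i
    rw [map_sub, hιX, hιC, map_div₀]
  rw [Finset.prod_congr rfl fun i _ => hfac i, hιC,
    map_mul (algebraMap K (AlgebraicClosure K)), map_pow (algebraMap K (AlgebraicClosure K)),
    map_mul ρ, map_pow ρ, hres1, map_mul ρ, map_pow ρ, map_prod ρ]
  exact field_calc m h.natDegree e d
    (by have := le_max_left h.natDegree q.natDegree; omega) t
    (ρ (algebraMap K (AlgebraicClosure K) ℓ))
    (fun i => ρ ((h.map (algebraMap K (AlgebraicClosure K))).eval (α i)))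
    (fun i => ρ ((q.map (algebraMap K (AlgebraicClosure K))).eval (α i)))
    (fun i => (map_ne_zero_iff ρ hρ).mpr (hH i))


end
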